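/- Let H be a Hopf algebra over a field k and P = ΣP₁⊗P₂ ∈ H ⊗ H satisfying Σ P₁S²(h₍₁₎) ⊗ P₂h₍₂₎ = Σ h₍₁₎P₁ ⊗ h₍₂₎P₂ for all h ∈ H. Define Φ_P : H* → H by Φ_P(ξ) = Σ ξ(P₁)P₂. Then: (i) Φ_P(h ⋄ ξ) = (ad h)(Φ_P(ξ)) for all h ∈ H and ξ ∈ H*, where (h ⋄ ξ)(x) = ξ(S(h₍₁₎) x S²(h₍₂₎)) and (ad h)(y) = h₍₁₎ y S(h₍₂₎); (ii) if ξ ∈ H* satisfies ξ(ab) = ξ(ba) for all a, b ∈ H, then Φ_P(ξ) lies in the center Z(H) of H. -/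

import Mathlib

open TensorProduct

noncomputable section

section HopfDefs

variable (k H : Type*) [Field k] [Ring H] [HopfAlgebra k H]

/-- The antipode, abbreviated. -/
def antip : H →ₗ[k] H := HopfAlgebra.antipode (R := k)

/-- The square of the antipode. -/
def antipSq : H →ₗ[k] H := antip k H ∘ₗ antip k H

/-- `sandwich (a ⊗ b)` is the linear endomorphism `x ↦ a * x * b` of `H`. -/
def sandwich : H ⊗[k] H →ₗ[k] Module.End k H :=
  TensorProduct.lift
    (LinearMap.mk₂ k
      (fun a b => LinearMap.mulRight k b ∘ₗ LinearMap.mulLeft k a)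
      (fun a a' b => by ext x; simp [add_mul])
      (fun c a b => by ext x; simp [smul_mul_assoc])
      (fun a b b' => by ext x; simp [mul_add])
      (fun c a b => by ext x; simp [mul_smul_comm]))

/-- `ad* h : x ↦ S(h₍₁₎) x S²(h₍₂₎)` (Sweedler sum understood). -/
def adStar (h : H) : Module.End k H :=
  sandwich k H (TensorProduct.map (antip k H) (antipSq k H) (Coalgebra.comul h))

/-- `ad h : y ↦ h₍₁₎ y S(h₍₂₎)` (Sweedler sum understood). -/
def adAct (h : H) : Module.End k H :=
  sandwich k H (TensorProduct.map LinearMap.id (antip k H) (Coalgebra.comul h))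

/-- For fixed `P = Σ P₁ ⊗ P₂ ∈ H ⊗ H`, the linear map sending
`(a ⊗ b) ⊗ c` to `Σ (a * P₁ * b) ⊗ (P₂ * c)`. -/
def thetaP (P : H ⊗[k] H) : (H ⊗[k] H) ⊗[k] H →ₗ[k] H ⊗[k] H :=
  TensorProduct.lift
    (LinearMap.mk₂ k
      (fun x c => TensorProduct.map (sandwich k H x) (LinearMap.mulRight k c) P)
      (fun x x' c => by
        simp only [map_add, TensorProduct.map_add_left, LinearMap.add_apply])
      (fun r x c => by
        simp only [map_smul, TensorProduct.map_smul_left, LinearMap.smul_apply])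
      (fun x c c' => by
        have h : LinearMap.mulRight k (c + c') =
            LinearMap.mulRight k c + LinearMap.mulRight k c' := by
          ext y; simp [mul_add]
        simp only [h, TensorProduct.map_add_right, LinearMap.add_apply])
      (fun r x c => by
        have h : LinearMap.mulRight k (r • c) = r • LinearMap.mulRight k c := by
          ext y; simp [mul_smul_comm]
        simp only [h, TensorProduct.map_smul_right, LinearMap.smul_apply]))

/-- Condition (a): `P · (S²⊗id)(Δ h) = Δ h · P` for all `h`. -/
def CondA (P : H ⊗[k] H) : Prop :=
  ∀ h : H,
    P * TensorProduct.map (antipSq k H) LinearMap.id (Coalgebra.comul h) =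
      Coalgebra.comul h * P

/-- Condition (b): `(1 ⊗ h) · P = Σ S(h₍₁₎) P₁ S²(h₍₂₎) ⊗ P₂ h₍₃₎` for all `h`. -/
def CondB (P : H ⊗[k] H) : Prop :=
  ∀ h : H,
    (1 ⊗ₜ[k] h) * P =
      thetaP k H P
        (TensorProduct.map (TensorProduct.map (antip k H) (antipSq k H)) LinearMap.id
          (TensorProduct.map Coalgebra.comul LinearMap.id (Coalgebra.comul h)))

/-- Condition (c): `Σ S(h₍₁₎) P₁ S²(h₍₂₎) ⊗ P₂ = Σ P₁ ⊗ h₍₁₎ P₂ S(h₍₂₎)` for all `h`. -/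
def CondC (P : H ⊗[k] H) : Prop :=
  ∀ h : H,
    TensorProduct.map (adStar k H h) LinearMap.id P =
      TensorProduct.map LinearMap.id (adAct k H h) P

end HopfDefs

/-- `Φ_P(ξ) = (ξ ⊗ id)(P)`. -/
def PhiP (k H : Type*) [Field k] [Ring H] [HopfAlgebra k H]
    (P : H ⊗[k] H) (ξ : H →ₗ[k] k) : H :=
  TensorProduct.lid k H (TensorProduct.map ξ LinearMap.id P)

namespace Stmt15Aux

open Coalgebra HopfAlgebra TensorProduct

variable {k H : Type*} [Field k] [Ring H] [HopfAlgebra k H]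

local notation "Sa" => antip k H

lemma sandwich_tmul (a b x : H) : sandwich k H (a ⊗ₜ[k] b) x = a * x * b := by
  simp [sandwich]



/-- L2 -/
lemma sum_counit_smul_right {h : H} (r : Repr k h (H × H)) :
    ∑ i ∈ r.index, Coalgebra.counit (R := k) (r.left i) • r.right i = h := by
  have := congrArg (TensorProduct.lid k H) (Coalgebra.sum_counit_tmul_eq (R := k) r)
  simp only [map_sum, TensorProduct.lid_tmul, one_smul] at this
  exact this

/-- L3 -/
lemma sum_counit_smul_left {h : H} (r : Repr k h (H × H)) :
    ∑ i ∈ r.index, Coalgebra.counit (R := k) (r.right i) • r.left i = h := by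
  have := congrArg (TensorProduct.rid k H) (Coalgebra.sum_tmul_counit_eq (R := k) r)
  simp only [map_sum, TensorProduct.rid_tmul, one_smul] at this
  exact this

/-- L1: coassociativity for Sweedler sums. -/
lemma coassoc_sum {M : Type*} [AddCommMonoid M] [Module k M]
    (Φ : (H ⊗[k] H) ⊗[k] H →ₗ[k] M) {h : H} (r : Repr k h (H × H))
    (w : ∀ i, Repr k (r.left i) (H × H)) (s : ∀ i, Repr k (r.right i) (H × H)) :
    ∑ i ∈ r.index, ∑ j ∈ (w i).index,
        Φ (((w i).left j ⊗ₜ[k] (w i).right j) ⊗ₜ[k] r.right i)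
      = ∑ i ∈ r.index, ∑ j ∈ (s i).index,
        Φ ((r.left i ⊗ₜ[k] (s i).left j) ⊗ₜ[k] (s i).right j) := by
  have hL : ∑ i ∈ r.index, ∑ j ∈ (w i).index,
      Φ (((w i).left j ⊗ₜ[k] (w i).right j) ⊗ₜ[k] r.right i)
      = Φ ((Coalgebra.comul (R := k)).rTensor H (Coalgebra.comul h)) := by
    rw [← r.eq, map_sum, map_sum]
    refine Finset.sum_congr rfl fun i _ => ?_
    rw [LinearMap.rTensor_tmul, ← (w i).eq, TensorProduct.sum_tmul, map_sum]
  set Φ' : H ⊗[k] (H ⊗[k] H) →ₗ[k] M :=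
    Φ ∘ₗ ((TensorProduct.assoc k H H H).symm : H ⊗[k] (H ⊗[k] H) ≃ₗ[k] _).toLinearMap with hΦ'
  have hR : ∑ i ∈ r.index, ∑ j ∈ (s i).index,
      Φ ((r.left i ⊗ₜ[k] (s i).left j) ⊗ₜ[k] (s i).right j)
      = Φ' ((Coalgebra.comul (R := k)).lTensor H (Coalgebra.comul h)) := by
    rw [← r.eq, map_sum, map_sum]
    refine Finset.sum_congr rfl fun i _ => ?_
    rw [LinearMap.lTensor_tmul, ← (s i).eq, TensorProduct.tmul_sum, map_sum]
    refine Finset.sum_congr rfl fun j _ => ?_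
    simp [hΦ']
  have hmid : Φ ((Coalgebra.comul (R := k)).rTensor H (Coalgebra.comul h))
      = Φ' ((Coalgebra.comul (R := k)).lTensor H (Coalgebra.comul h)) := by
    rw [← Coalgebra.coassoc_apply, hΦ']
    simp
  rw [hL, hmid, hR]

/-- product representation -/
def reprMul {ι κ : Type*} {a b : H} (u : Repr k a ι) (v : Repr k b κ) : Repr k (a * b) (ι × κ) where
  index := u.index ×ˢ v.index
  left := fun p => u.left p.1 * v.left p.2
  right := fun p => u.right p.1 * v.right p.2
  eq := by
    rw [Finset.sum_product]
    rw [Bialgebra.comul_mul, ← u.eq, ← v.eq, Finset.sum_mul_sum]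
    simp [Algebra.TensorProduct.tmul_mul_tmul]

end Stmt15Aux

namespace Stmt15Aux

variable {k H : Type*} [Field k] [Ring H] [HopfAlgebra k H]

open Coalgebra HopfAlgebra TensorProduct

local notation "Sa" => HopfAlgebra.antipode (R := k) (A := H)

lemma antip_apply (x : H) : antip k H x = Sa x := rfl

/-- `sandAt q (a ⊗ b) = a * q * b`. -/
def sandAt (q : H) : H ⊗[k] H →ₗ[k] H :=
  LinearMap.applyₗ q ∘ₗ sandwich k H

lemma sandAt_tmul (q a b : H) : sandAt q (a ⊗ₜ[k] b) = a * q * b := by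
  simp [sandAt, sandwich]

variable (k) in
/-- `adAct` as a linear map in `h`. -/
def adActL : H →ₗ[k] Module.End k H :=
  sandwich k H ∘ₗ TensorProduct.map LinearMap.id (antip k H) ∘ₗ Coalgebra.comul

lemma adActL_eq (h : H) : adActL k h = adAct k H h := rfl

lemma adActL_apply {c : H} (t : Repr k c (H × H)) (q : H) :
    adActL k c q = ∑ l ∈ t.index, t.left l * q * Sa (t.right l) := by
  rw [adActL]
  simp only [LinearMap.comp_apply, ← t.eq, map_sum, TensorProduct.map_tmul,
    LinearMap.coe_sum, Finset.sum_apply]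
  exact Finset.sum_congr rfl fun i _ => by rw [sandwich_tmul]; rfl

lemma adStar_apply {h : H} (r : Repr k h (H × H)) (x : H) :
    adStar k H h x = ∑ i ∈ r.index, Sa (r.left i) * x * (Sa (Sa (r.right i))) := by
  rw [adStar, ← r.eq]
  simp only [map_sum, TensorProduct.map_tmul, LinearMap.coe_sum, Finset.sum_apply]
  exact Finset.sum_congr rfl fun i _ => by rw [sandwich_tmul]; rfl

lemma antipode_one : Sa (1 : H) = 1 := by
  have := HopfAlgebra.mul_antipode_rTensor_comul_apply (R := k) (a := (1:H))
  rw [Bialgebra.comul_one, Algebra.TensorProduct.one_def, LinearMap.rTensor_tmul] at this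
  simpa using this

/-- Anti-multiplicativity of the antipode. -/
lemma antipode_mul (a b : H) : Sa (a * b) = Sa b * Sa a := by
  classical
  set r := Repr.arbitrary k a with hr
  set s := Repr.arbitrary k b with hs
  set r' : ∀ i, Repr k (r.right i) (H × H) := fun i => Repr.arbitrary k _ with hr'
  set s' : ∀ m, Repr k (s.right m) (H × H) := fun m => Repr.arbitrary k _ with hs'
  set w : ∀ i, Repr k (r.left i) (H × H) := fun i => Repr.arbitrary k _ with hw
  set v : ∀ m, Repr k (s.left m) (H × H) := fun m => Repr.arbitrary k _ with hv
  have claimA : (∑ m ∈ s.index, ∑ n ∈ (s' m).index, ∑ i ∈ r.index, ∑ j ∈ (r' i).index,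
      Sa (s.left m) * Sa (r.left i) *
        (((r' i).left j * (s' m).left n) * Sa ((r' i).right j * (s' m).right n)))
      = Sa b * Sa a := by
    have inner : ∀ m ∈ s.index, ∀ i ∈ r.index,
        (∑ n ∈ (s' m).index, ∑ j ∈ (r' i).index,
          Sa (s.left m) * Sa (r.left i) *
            (((r' i).left j * (s' m).left n) * Sa ((r' i).right j * (s' m).right n)))
        = (Coalgebra.counit (R := k) (r.right i) * Coalgebra.counit (R := k) (s.right m)) •
            (Sa (s.left m) * Sa (r.left i)) := by
      intro m _ i _
      rw [Finset.sum_comm]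
      have hx := HopfAlgebra.sum_mul_antipode_eq_smul (R := k) (reprMul (r' i) (s' m))
      rw [reprMul, Finset.sum_product] at hx
      simp only [Bialgebra.counit_mul] at hx
      calc (∑ j ∈ (r' i).index, ∑ n ∈ (s' m).index,
            Sa (s.left m) * Sa (r.left i) *
              (((r' i).left j * (s' m).left n) * Sa ((r' i).right j * (s' m).right n)))
          = Sa (s.left m) * Sa (r.left i) *
              (∑ j ∈ (r' i).index, ∑ n ∈ (s' m).index,
                ((r' i).left j * (s' m).left n) * Sa ((r' i).right j * (s' m).right n)) := by
            rw [Finset.mul_sum]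
            exact Finset.sum_congr rfl fun j _ => by rw [Finset.mul_sum]
        _ = Sa (s.left m) * Sa (r.left i) *
              ((Coalgebra.counit (R := k) (r.right i) * Coalgebra.counit (R := k) (s.right m))
                • (1 : H)) := by rw [hx]
        _ = (Coalgebra.counit (R := k) (r.right i) * Coalgebra.counit (R := k) (s.right m)) •
              (Sa (s.left m) * Sa (r.left i)) := by
            rw [mul_smul_comm, mul_one]
    calc (∑ m ∈ s.index, ∑ n ∈ (s' m).index, ∑ i ∈ r.index, ∑ j ∈ (r' i).index,
          Sa (s.left m) * Sa (r.left i) *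
            (((r' i).left j * (s' m).left n) * Sa ((r' i).right j * (s' m).right n)))
        = ∑ m ∈ s.index, ∑ i ∈ r.index, ∑ n ∈ (s' m).index, ∑ j ∈ (r' i).index,
          Sa (s.left m) * Sa (r.left i) *
            (((r' i).left j * (s' m).left n) * Sa ((r' i).right j * (s' m).right n)) := by
          exact Finset.sum_congr rfl fun m _ => Finset.sum_comm
      _ = ∑ m ∈ s.index, ∑ i ∈ r.index,
            (Coalgebra.counit (R := k) (r.right i) * Coalgebra.counit (R := k) (s.right m)) •
              (Sa (s.left m) * Sa (r.left i)) := by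
          refine Finset.sum_congr rfl fun m hm => Finset.sum_congr rfl fun i hi => ?_
          exact inner m hm i hi
      _ = (∑ m ∈ s.index, Coalgebra.counit (R := k) (s.right m) • Sa (s.left m)) *
            (∑ i ∈ r.index, Coalgebra.counit (R := k) (r.right i) • Sa (r.left i)) := by
          rw [Finset.sum_mul_sum]
          refine Finset.sum_congr rfl fun m _ => Finset.sum_congr rfl fun i _ => ?_
          rw [smul_mul_assoc, mul_smul_comm, smul_smul, mul_comm]
      _ = Sa b * Sa a := by
          congr 1
          · conv_rhs => rw [← sum_counit_smul_left s]
            rw [map_sum]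
            exact Finset.sum_congr rfl fun m _ => by rw [map_smul]
          · conv_rhs => rw [← sum_counit_smul_left r]
            rw [map_sum]
            exact Finset.sum_congr rfl fun i _ => by rw [map_smul]
  have claimB : (∑ m ∈ s.index, ∑ n ∈ (s' m).index, ∑ i ∈ r.index, ∑ j ∈ (r' i).index,
      Sa (s.left m) * Sa (r.left i) *
        (((r' i).left j * (s' m).left n) * Sa ((r' i).right j * (s' m).right n)))
      = Sa (a * b) := by
    have step1 : ∀ (m : (H × H)) (n : (H × H)),
        (∑ i ∈ r.index, ∑ j ∈ (r' i).index,
          Sa (s.left m) * Sa (r.left i) *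
            (((r' i).left j * (s' m).left n) * Sa ((r' i).right j * (s' m).right n)))
        = ∑ i ∈ r.index, ∑ j ∈ (w i).index,
            Sa (s.left m) * ((Sa ((w i).left j) * (w i).right j) *
              ((s' m).left n * Sa (r.right i * (s' m).right n))) := by
      intro m n
      set Φ : (H ⊗[k] H) ⊗[k] H →ₗ[k] H :=
        LinearMap.mul' k H ∘ₗ TensorProduct.map
          (LinearMap.mulLeft k (Sa (s.left m)) ∘ₗ
            LinearMap.mulRight k ((s' m).left n) ∘ₗ
            LinearMap.mul' k H ∘ₗ
              TensorProduct.map (HopfAlgebra.antipode (R := k)) LinearMap.id)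
          ((HopfAlgebra.antipode (R := k)) ∘ₗ LinearMap.mulRight k ((s' m).right n)) with hΦ
      have hΦev : ∀ x y z : H, Φ ((x ⊗ₜ[k] y) ⊗ₜ[k] z)
          = (Sa (s.left m) * ((Sa x * y) * (s' m).left n)) * Sa (z * (s' m).right n) := by
        intro x y z
        simp [hΦ, mul_assoc]
      have key := coassoc_sum Φ r w r'
      calc (∑ i ∈ r.index, ∑ j ∈ (r' i).index,
            Sa (s.left m) * Sa (r.left i) *
              (((r' i).left j * (s' m).left n) * Sa ((r' i).right j * (s' m).right n)))
          = ∑ i ∈ r.index, ∑ j ∈ (r' i).index,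
            Φ ((r.left i ⊗ₜ[k] (r' i).left j) ⊗ₜ[k] (r' i).right j) := by
            refine Finset.sum_congr rfl fun i _ => Finset.sum_congr rfl fun j _ => ?_
            rw [hΦev]
            noncomm_ring
        _ = ∑ i ∈ r.index, ∑ j ∈ (w i).index,
            Φ (((w i).left j ⊗ₜ[k] (w i).right j) ⊗ₜ[k] r.right i) := key.symm
        _ = ∑ i ∈ r.index, ∑ j ∈ (w i).index,
            Sa (s.left m) * ((Sa ((w i).left j) * (w i).right j) *
              ((s' m).left n * Sa (r.right i * (s' m).right n))) := by
            refine Finset.sum_congr rfl fun i _ => Finset.sum_congr rfl fun j _ => ?_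
            rw [hΦev]
            noncomm_ring
    have step2 : ∀ (m : (H × H)) (n : (H × H)) (i : (H × H)),
        (∑ j ∈ (w i).index,
          Sa (s.left m) * ((Sa ((w i).left j) * (w i).right j) *
            ((s' m).left n * Sa (r.right i * (s' m).right n))))
        = Coalgebra.counit (R := k) (r.left i) •
            (Sa (s.left m) * ((s' m).left n * Sa (r.right i * (s' m).right n))) := by
      intro m n i
      rw [← Finset.mul_sum, ← Finset.sum_mul, HopfAlgebra.sum_antipode_mul_eq_algebraMap_counit (w i),
        ← Algebra.smul_def, mul_smul_comm]
    have step3 : ∀ (m : (H × H)) (n : (H × H)),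
        (∑ i ∈ r.index, Coalgebra.counit (R := k) (r.left i) •
            (Sa (s.left m) * ((s' m).left n * Sa (r.right i * (s' m).right n))))
        = Sa (s.left m) * ((s' m).left n * Sa (a * (s' m).right n)) := by
      intro m n
      have h1 : (∑ i ∈ r.index, Coalgebra.counit (R := k) (r.left i) •
          (r.right i * (s' m).right n)) = a * (s' m).right n := by
        calc (∑ i ∈ r.index, Coalgebra.counit (R := k) (r.left i) •
              (r.right i * (s' m).right n))
            = ∑ i ∈ r.index, (Coalgebra.counit (R := k) (r.left i) • r.right i) *
                (s' m).right n := by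
              exact Finset.sum_congr rfl fun i _ => (smul_mul_assoc _ _ _).symm
          _ = (∑ i ∈ r.index, Coalgebra.counit (R := k) (r.left i) • r.right i) *
                (s' m).right n := by rw [Finset.sum_mul]
          _ = a * (s' m).right n := by rw [sum_counit_smul_right r]
      have h2 : (∑ i ∈ r.index, Coalgebra.counit (R := k) (r.left i) •
          Sa (r.right i * (s' m).right n)) = Sa (a * (s' m).right n) := by
        rw [← h1, map_sum]
        exact Finset.sum_congr rfl fun i _ => by rw [map_smul]
      calc (∑ i ∈ r.index, Coalgebra.counit (R := k) (r.left i) •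
            (Sa (s.left m) * ((s' m).left n * Sa (r.right i * (s' m).right n))))
          = Sa (s.left m) * ((s' m).left n *
              (∑ i ∈ r.index, Coalgebra.counit (R := k) (r.left i) •
                Sa (r.right i * (s' m).right n))) := by
            rw [Finset.mul_sum]
            conv_rhs => rw [Finset.mul_sum]
            exact Finset.sum_congr rfl fun i _ => by rw [mul_smul_comm, mul_smul_comm]
        _ = Sa (s.left m) * ((s' m).left n * Sa (a * (s' m).right n)) := by rw [h2]
    have step4 : (∑ m ∈ s.index, ∑ n ∈ (s' m).index,
          Sa (s.left m) * ((s' m).left n * Sa (a * (s' m).right n)))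
        = ∑ m ∈ s.index, ∑ n ∈ (v m).index,
            (Sa ((v m).left n) * (v m).right n) * Sa (a * s.right m) := by
      set Φ₂ : (H ⊗[k] H) ⊗[k] H →ₗ[k] H :=
        LinearMap.mul' k H ∘ₗ TensorProduct.map
          (LinearMap.mul' k H ∘ₗ
            TensorProduct.map (HopfAlgebra.antipode (R := k)) LinearMap.id)
          ((HopfAlgebra.antipode (R := k)) ∘ₗ LinearMap.mulLeft k a) with hΦ₂
      have hev : ∀ x y z : H, Φ₂ ((x ⊗ₜ[k] y) ⊗ₜ[k] z) = (Sa x * y) * Sa (a * z) := by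
        intro x y z
        simp [hΦ₂]
      have key := coassoc_sum Φ₂ s v s'
      calc (∑ m ∈ s.index, ∑ n ∈ (s' m).index,
            Sa (s.left m) * ((s' m).left n * Sa (a * (s' m).right n)))
          = ∑ m ∈ s.index, ∑ n ∈ (s' m).index,
              Φ₂ ((s.left m ⊗ₜ[k] (s' m).left n) ⊗ₜ[k] (s' m).right n) := by
            refine Finset.sum_congr rfl fun m _ => Finset.sum_congr rfl fun n _ => ?_
            rw [hev, mul_assoc]
        _ = ∑ m ∈ s.index, ∑ n ∈ (v m).index,
              Φ₂ (((v m).left n ⊗ₜ[k] (v m).right n) ⊗ₜ[k] s.right m) := key.symm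
        _ = ∑ m ∈ s.index, ∑ n ∈ (v m).index,
              (Sa ((v m).left n) * (v m).right n) * Sa (a * s.right m) := by
            refine Finset.sum_congr rfl fun m _ => Finset.sum_congr rfl fun n _ => ?_
            rw [hev]
    have step5 : (∑ m ∈ s.index, ∑ n ∈ (v m).index,
          (Sa ((v m).left n) * (v m).right n) * Sa (a * s.right m)) = Sa (a * b) := by
      have h5 : ∀ m : (H × H), (∑ n ∈ (v m).index,
            (Sa ((v m).left n) * (v m).right n) * Sa (a * s.right m))
          = Coalgebra.counit (R := k) (s.left m) • Sa (a * s.right m) := by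
        intro m
        rw [← Finset.sum_mul, HopfAlgebra.sum_antipode_mul_eq_algebraMap_counit (v m), ← Algebra.smul_def]
      have h6 : (∑ m ∈ s.index, Coalgebra.counit (R := k) (s.left m) • (a * s.right m))
          = a * b := by
        calc (∑ m ∈ s.index, Coalgebra.counit (R := k) (s.left m) • (a * s.right m))
            = ∑ m ∈ s.index, a * (Coalgebra.counit (R := k) (s.left m) • s.right m) := by
              exact Finset.sum_congr rfl fun m _ => (mul_smul_comm _ _ _).symm
          _ = a * ∑ m ∈ s.index, Coalgebra.counit (R := k) (s.left m) • s.right m := by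
              rw [Finset.mul_sum]
          _ = a * b := by rw [sum_counit_smul_right s]
      have h7 : (∑ m ∈ s.index, Coalgebra.counit (R := k) (s.left m) •
          Sa (a * s.right m)) = Sa (a * b) := by
        rw [← h6, map_sum]
        exact Finset.sum_congr rfl fun m _ => by rw [map_smul]
      rw [← h7]
      exact Finset.sum_congr rfl fun m _ => h5 m
    calc (∑ m ∈ s.index, ∑ n ∈ (s' m).index, ∑ i ∈ r.index, ∑ j ∈ (r' i).index,
          Sa (s.left m) * Sa (r.left i) *
            (((r' i).left j * (s' m).left n) * Sa ((r' i).right j * (s' m).right n)))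
        = ∑ m ∈ s.index, ∑ n ∈ (s' m).index, ∑ i ∈ r.index,
            Coalgebra.counit (R := k) (r.left i) •
              (Sa (s.left m) * ((s' m).left n * Sa (r.right i * (s' m).right n))) := by
          refine Finset.sum_congr rfl fun m _ => Finset.sum_congr rfl fun n _ => ?_
          rw [step1 m n]
          exact Finset.sum_congr rfl fun i _ => step2 m n i
      _ = ∑ m ∈ s.index, ∑ n ∈ (s' m).index,
            Sa (s.left m) * ((s' m).left n * Sa (a * (s' m).right n)) := by
          refine Finset.sum_congr rfl fun m _ => Finset.sum_congr rfl fun n _ => ?_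
          exact step3 m n
      _ = Sa (a * b) := by rw [step4, step5]
  rw [← claimB, claimA]

/-- `Σ S²(h₂) S(h₁) = ε(h) • 1`. -/
lemma sum_antipodeSq_mul_antipode {h : H} (r : Repr k h (H × H)) :
    ∑ i ∈ r.index, Sa (Sa (r.right i)) * Sa (r.left i)
      = Coalgebra.counit (R := k) h • (1 : H) := by
  calc (∑ i ∈ r.index, Sa (Sa (r.right i)) * Sa (r.left i))
      = ∑ i ∈ r.index, Sa (r.left i * Sa (r.right i)) := by
        exact Finset.sum_congr rfl fun i _ => (antipode_mul _ _).symm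
    _ = Sa (∑ i ∈ r.index, r.left i * Sa (r.right i)) := (map_sum _ _ _).symm
    _ = Sa ((Coalgebra.counit (R := k) h : k) • (1 : H)) := by
        rw [HopfAlgebra.sum_mul_antipode_eq_smul r]
    _ = Coalgebra.counit (R := k) h • (1 : H) := by rw [map_smul, antipode_one]

end Stmt15Aux

namespace Stmt15Aux

variable {k H : Type*} [Field k] [Ring H] [HopfAlgebra k H]

open Coalgebra HopfAlgebra TensorProduct

local notation "Sa" => HopfAlgebra.antipode (R := k) (A := H)

lemma applyl_eval (q : H) (f : H →ₗ[k] H) : LinearMap.applyₗ (R := k) q f = f q := rfl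

/-- CondA in Sweedler-sum form. -/
lemma condA_sum {P : H ⊗[k] H} (hP : CondA k H P) {F : Finset (H × H)}
    (hF : P = ∑ z ∈ F, z.1 ⊗ₜ[k] z.2) {b : H} (u : Repr k b (H × H)) :
    (∑ z ∈ F, ∑ l ∈ u.index, (z.1 * Sa (Sa (u.left l))) ⊗ₜ[k] (z.2 * u.right l))
      = ∑ l ∈ u.index, ∑ z ∈ F, (u.left l * z.1) ⊗ₜ[k] (u.right l * z.2) := by
  have hc := hP b
  have e1 : P * TensorProduct.map (antipSq k H) LinearMap.id (Coalgebra.comul b)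
      = ∑ z ∈ F, ∑ l ∈ u.index, (z.1 * Sa (Sa (u.left l))) ⊗ₜ[k] (z.2 * u.right l) := by
    rw [← u.eq, hF, map_sum, Finset.sum_mul_sum]
    refine Finset.sum_congr rfl fun z _ => Finset.sum_congr rfl fun l _ => ?_
    rw [TensorProduct.map_tmul, Algebra.TensorProduct.tmul_mul_tmul]
    rfl
  have e2 : Coalgebra.comul (R := k) b * P
      = ∑ l ∈ u.index, ∑ z ∈ F, (u.left l * z.1) ⊗ₜ[k] (u.right l * z.2) := by
    rw [← u.eq, hF, Finset.sum_mul_sum]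
    refine Finset.sum_congr rfl fun l _ => Finset.sum_congr rfl fun z _ => ?_
    rw [Algebra.TensorProduct.tmul_mul_tmul]
  rw [← e1, ← e2, hc]

lemma condC_of_condA {P : H ⊗[k] H} (hP : CondA k H P) : CondC k H P := by
  classical
  intro h
  obtain ⟨F, hF⟩ := TensorProduct.exists_finset (R := k) P
  set r := Repr.arbitrary k h with hrdef
  set s : ∀ i, Repr k (r.right i) (H × H) := fun i => Repr.arbitrary k _ with hsdef
  set t : ∀ i j, Repr k ((s i).right j) (H × H) := fun i j => Repr.arbitrary k _ with htdef
  set u : ∀ i j, Repr k ((s i).left j) (H × H) := fun i j => Repr.arbitrary k _ with hudef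
  set w : ∀ i, Repr k (r.left i) (H × H) := fun i => Repr.arbitrary k _ with hwdef
  -- evaluation of the two sides
  have E1 : TensorProduct.map (adStar k H h) LinearMap.id P
      = ∑ i ∈ r.index, ∑ z ∈ F,
          (Sa (r.left i) * z.1 * Sa (Sa (r.right i))) ⊗ₜ[k] z.2 := by
    rw [hF, map_sum]
    have hz : ∀ z : H × H, TensorProduct.map (adStar k H h) LinearMap.id (z.1 ⊗ₜ[k] z.2)
        = ∑ i ∈ r.index, (Sa (r.left i) * z.1 * Sa (Sa (r.right i))) ⊗ₜ[k] z.2 := by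
      intro z
      rw [TensorProduct.map_tmul, adStar_apply r, TensorProduct.sum_tmul]
      simp
    rw [Finset.sum_congr rfl fun z _ => hz z, Finset.sum_comm]
  have E2 : TensorProduct.map LinearMap.id (adAct k H h) P
      = ∑ z ∈ F, z.1 ⊗ₜ[k] adActL k h z.2 := by
    rw [hF, map_sum]
    refine Finset.sum_congr rfl fun z _ => ?_
    rw [TensorProduct.map_tmul, ← adActL_eq]
    simp
  rw [E1, E2]
  -- main chain
  calc (∑ i ∈ r.index, ∑ z ∈ F,
        (Sa (r.left i) * z.1 * Sa (Sa (r.right i))) ⊗ₜ[k] z.2)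
      -- T1 : expand the second leg of Δh
      = ∑ i ∈ r.index, ∑ j ∈ (s i).index, Coalgebra.counit (R := k) ((s i).right j) •
          ∑ z ∈ F, (Sa (r.left i) * z.1 * Sa (Sa ((s i).left j))) ⊗ₜ[k] z.2 := by
        refine Finset.sum_congr rfl fun i _ => ?_
        set ψ : H →ₗ[k] H ⊗[k] H := ∑ z ∈ F,
          (TensorProduct.mk k H H).flip z.2 ∘ₗ LinearMap.mulLeft k (Sa (r.left i) * z.1)
            ∘ₗ (HopfAlgebra.antipode (R := k)) ∘ₗ (HopfAlgebra.antipode (R := k)) with hψ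
        have hψev : ∀ x : H,
            ψ x = ∑ z ∈ F, (Sa (r.left i) * z.1 * Sa (Sa x)) ⊗ₜ[k] z.2 := by
          intro x
          rw [hψ]
          simp only [LinearMap.coe_sum, Finset.sum_apply, LinearMap.comp_apply,
            LinearMap.mulLeft_apply, LinearMap.flip_apply, TensorProduct.mk_apply]
        have hkey := congrArg ψ (sum_counit_smul_left (s i))
        rw [map_sum] at hkey
        calc (∑ z ∈ F, (Sa (r.left i) * z.1 * Sa (Sa (r.right i))) ⊗ₜ[k] z.2)
            = ψ (r.right i) := (hψev _).symm
          _ = ∑ j ∈ (s i).index, Coalgebra.counit (R := k) ((s i).right j) •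
                ∑ z ∈ F, (Sa (r.left i) * z.1 * Sa (Sa ((s i).left j))) ⊗ₜ[k] z.2 := by
              rw [← hkey]
              exact Finset.sum_congr rfl fun j _ => by rw [map_smul, hψev]
      -- T2 : counit as h₃ S(h₄)
      _ = ∑ i ∈ r.index, ∑ j ∈ (s i).index, ∑ l ∈ (t i j).index, ∑ z ∈ F,
            (Sa (r.left i) * z.1 * Sa (Sa ((s i).left j))) ⊗ₜ[k]
              (z.2 * ((t i j).left l * Sa ((t i j).right l))) := by
        refine Finset.sum_congr rfl fun i _ => Finset.sum_congr rfl fun j _ => ?_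
        rw [Finset.smul_sum, Finset.sum_comm]
        refine Finset.sum_congr rfl fun z _ => ?_
        rw [← TensorProduct.tmul_smul]
        have : Coalgebra.counit (R := k) ((s i).right j) • z.2
            = ∑ l ∈ (t i j).index, z.2 * ((t i j).left l * Sa ((t i j).right l)) := by
          rw [← Finset.mul_sum, HopfAlgebra.sum_mul_antipode_eq_smul (t i j),
            mul_smul_comm, mul_one]
        rw [this, TensorProduct.tmul_sum]
      -- T3 : coassociativity swap on Δ(h₂)
      _ = ∑ i ∈ r.index, ∑ j ∈ (s i).index, ∑ l ∈ (u i j).index, ∑ z ∈ F,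
            (Sa (r.left i) * z.1 * Sa (Sa ((u i j).left l))) ⊗ₜ[k]
              (z.2 * ((u i j).right l * Sa ((s i).right j))) := by
        refine Finset.sum_congr rfl fun i _ => ?_
        set Φ : (H ⊗[k] H) ⊗[k] H →ₗ[k] H ⊗[k] H :=
          (∑ z ∈ F, TensorProduct.map
            (LinearMap.mulLeft k (Sa (r.left i) * z.1)
              ∘ₗ (HopfAlgebra.antipode (R := k)) ∘ₗ (HopfAlgebra.antipode (R := k)))
            (LinearMap.mulLeft k z.2 ∘ₗ LinearMap.mul' k H
              ∘ₗ TensorProduct.map LinearMap.id (HopfAlgebra.antipode (R := k))))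
          ∘ₗ (TensorProduct.assoc k H H H).toLinearMap with hΦ
        have hΦev : ∀ x y d : H, Φ ((x ⊗ₜ[k] y) ⊗ₜ[k] d)
            = ∑ z ∈ F, (Sa (r.left i) * z.1 * Sa (Sa x)) ⊗ₜ[k] (z.2 * (y * Sa d)) := by
          intro x y d
          rw [hΦ]
          simp only [LinearMap.comp_apply, LinearEquiv.coe_coe, TensorProduct.assoc_tmul,
            LinearMap.coe_sum, Finset.sum_apply, TensorProduct.map_tmul,
            LinearMap.mulLeft_apply, LinearMap.mul'_apply, LinearMap.id_coe, id_eq]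
        have hkey := coassoc_sum Φ (s i) (u i) (t i)
        calc (∑ j ∈ (s i).index, ∑ l ∈ (t i j).index, ∑ z ∈ F,
              (Sa (r.left i) * z.1 * Sa (Sa ((s i).left j))) ⊗ₜ[k]
                (z.2 * ((t i j).left l * Sa ((t i j).right l))))
            = ∑ j ∈ (s i).index, ∑ l ∈ (t i j).index,
                Φ (((s i).left j ⊗ₜ[k] (t i j).left l) ⊗ₜ[k] (t i j).right l) := by
              refine Finset.sum_congr rfl fun j _ => Finset.sum_congr rfl fun l _ => ?_
              rw [hΦev]
          _ = ∑ j ∈ (s i).index, ∑ l ∈ (u i j).index,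
                Φ (((u i j).left l ⊗ₜ[k] (u i j).right l) ⊗ₜ[k] (s i).right j) := hkey.symm
          _ = ∑ j ∈ (s i).index, ∑ l ∈ (u i j).index, ∑ z ∈ F,
              (Sa (r.left i) * z.1 * Sa (Sa ((u i j).left l))) ⊗ₜ[k]
                (z.2 * ((u i j).right l * Sa ((s i).right j))) := by
              refine Finset.sum_congr rfl fun j _ => Finset.sum_congr rfl fun l _ => ?_
              rw [hΦev]
      -- T4 : apply CondA in the middle
      _ = ∑ i ∈ r.index, ∑ j ∈ (s i).index, ∑ l ∈ (u i j).index, ∑ z ∈ F,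
            (Sa (r.left i) * ((u i j).left l * z.1)) ⊗ₜ[k]
              ((u i j).right l * z.2 * Sa ((s i).right j)) := by
        refine Finset.sum_congr rfl fun i _ => Finset.sum_congr rfl fun j _ => ?_
        set Ψ : H ⊗[k] H →ₗ[k] H ⊗[k] H :=
          TensorProduct.map (LinearMap.mulLeft k (Sa (r.left i)))
            (LinearMap.mulRight k (Sa ((s i).right j))) with hΨ
        have hkey := congrArg Ψ (condA_sum hP hF (u i j))
        simp only [map_sum, hΨ, TensorProduct.map_tmul, LinearMap.mulLeft_apply,
          LinearMap.mulRight_apply] at hkey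
        calc (∑ l ∈ (u i j).index, ∑ z ∈ F,
              (Sa (r.left i) * z.1 * Sa (Sa ((u i j).left l))) ⊗ₜ[k]
                (z.2 * ((u i j).right l * Sa ((s i).right j))))
            = ∑ z ∈ F, ∑ l ∈ (u i j).index,
              (Sa (r.left i) * (z.1 * Sa (Sa ((u i j).left l)))) ⊗ₜ[k]
                (z.2 * (u i j).right l * Sa ((s i).right j)) := by
              rw [Finset.sum_comm]
              refine Finset.sum_congr rfl fun z _ => Finset.sum_congr rfl fun l _ => ?_
              rw [mul_assoc, mul_assoc]
          _ = ∑ l ∈ (u i j).index, ∑ z ∈ F,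
              (Sa (r.left i) * ((u i j).left l * z.1)) ⊗ₜ[k]
                ((u i j).right l * z.2 * Sa ((s i).right j)) := hkey
      -- T5 : coassociativity swap back on Δ(h₂)
      _ = ∑ i ∈ r.index, ∑ j ∈ (s i).index, ∑ z ∈ F,
            (Sa (r.left i) * ((s i).left j * z.1)) ⊗ₜ[k]
              adActL k ((s i).right j) z.2 := by
        refine Finset.sum_congr rfl fun i _ => ?_
        set Φ' : (H ⊗[k] H) ⊗[k] H →ₗ[k] H ⊗[k] H :=
          (∑ z ∈ F, TensorProduct.map
            (LinearMap.mulLeft k (Sa (r.left i)) ∘ₗ LinearMap.mulRight k z.1)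
            (sandAt z.2 ∘ₗ TensorProduct.map LinearMap.id (HopfAlgebra.antipode (R := k))))
          ∘ₗ (TensorProduct.assoc k H H H).toLinearMap with hΦ'
        have hΦ'ev : ∀ x y d : H, Φ' ((x ⊗ₜ[k] y) ⊗ₜ[k] d)
            = ∑ z ∈ F, (Sa (r.left i) * (x * z.1)) ⊗ₜ[k] (y * z.2 * Sa d) := by
          intro x y d
          rw [hΦ']
          simp only [LinearMap.comp_apply, LinearEquiv.coe_coe, TensorProduct.assoc_tmul,
            LinearMap.coe_sum, Finset.sum_apply, TensorProduct.map_tmul,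
            LinearMap.mulLeft_apply, LinearMap.mulRight_apply, LinearMap.id_coe, id_eq,
            sandAt_tmul]
        have hkey := coassoc_sum Φ' (s i) (u i) (t i)
        calc (∑ j ∈ (s i).index, ∑ l ∈ (u i j).index, ∑ z ∈ F,
              (Sa (r.left i) * ((u i j).left l * z.1)) ⊗ₜ[k]
                ((u i j).right l * z.2 * Sa ((s i).right j)))
            = ∑ j ∈ (s i).index, ∑ l ∈ (u i j).index,
                Φ' (((u i j).left l ⊗ₜ[k] (u i j).right l) ⊗ₜ[k] (s i).right j) := by
              refine Finset.sum_congr rfl fun j _ => Finset.sum_congr rfl fun l _ => ?_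
              rw [hΦ'ev]
          _ = ∑ j ∈ (s i).index, ∑ l ∈ (t i j).index,
                Φ' (((s i).left j ⊗ₜ[k] (t i j).left l) ⊗ₜ[k] (t i j).right l) := hkey
          _ = ∑ j ∈ (s i).index, ∑ z ∈ F,
              (Sa (r.left i) * ((s i).left j * z.1)) ⊗ₜ[k]
                adActL k ((s i).right j) z.2 := by
              refine Finset.sum_congr rfl fun j _ => ?_
              rw [Finset.sum_congr rfl fun l (_ : l ∈ (t i j).index) => hΦ'ev _ _ _,
                Finset.sum_comm]
              refine Finset.sum_congr rfl fun z _ => ?_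
              rw [← TensorProduct.tmul_sum, adActL_apply (t i j)]
      -- T6 : coassociativity swap on Δh
      _ = ∑ i ∈ r.index, ∑ j ∈ (w i).index, ∑ z ∈ F,
            (Sa ((w i).left j) * ((w i).right j * z.1)) ⊗ₜ[k]
              adActL k (r.right i) z.2 := by
        set Φ'' : (H ⊗[k] H) ⊗[k] H →ₗ[k] H ⊗[k] H :=
          ∑ z ∈ F, TensorProduct.map
            (LinearMap.mul' k H ∘ₗ TensorProduct.map (HopfAlgebra.antipode (R := k))
              (LinearMap.mulRight k z.1))
            (LinearMap.applyₗ z.2 ∘ₗ adActL k) with hΦ''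
        have hΦ''ev : ∀ x y d : H, Φ'' ((x ⊗ₜ[k] y) ⊗ₜ[k] d)
            = ∑ z ∈ F, (Sa x * (y * z.1)) ⊗ₜ[k] adActL k d z.2 := by
          intro x y d
          rw [hΦ'']
          simp only [LinearMap.coe_sum, Finset.sum_apply, TensorProduct.map_tmul,
            LinearMap.comp_apply, LinearMap.mul'_apply, LinearMap.mulRight_apply,
            applyl_eval]
        have hkey := coassoc_sum Φ'' r w s
        calc (∑ i ∈ r.index, ∑ j ∈ (s i).index, ∑ z ∈ F,
              (Sa (r.left i) * ((s i).left j * z.1)) ⊗ₜ[k]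
                adActL k ((s i).right j) z.2)
            = ∑ i ∈ r.index, ∑ j ∈ (s i).index,
                Φ'' ((r.left i ⊗ₜ[k] (s i).left j) ⊗ₜ[k] (s i).right j) := by
              refine Finset.sum_congr rfl fun i _ => Finset.sum_congr rfl fun j _ => ?_
              rw [hΦ''ev]
          _ = ∑ i ∈ r.index, ∑ j ∈ (w i).index,
                Φ'' (((w i).left j ⊗ₜ[k] (w i).right j) ⊗ₜ[k] r.right i) := hkey.symm
          _ = ∑ i ∈ r.index, ∑ j ∈ (w i).index, ∑ z ∈ F,
              (Sa ((w i).left j) * ((w i).right j * z.1)) ⊗ₜ[k]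
                adActL k (r.right i) z.2 := by
              refine Finset.sum_congr rfl fun i _ => Finset.sum_congr rfl fun j _ => ?_
              rw [hΦ''ev]
      -- T7 : collapse S(h₁)h₂
      _ = ∑ i ∈ r.index, ∑ z ∈ F, Coalgebra.counit (R := k) (r.left i) •
            (z.1 ⊗ₜ[k] adActL k (r.right i) z.2) := by
        refine Finset.sum_congr rfl fun i _ => ?_
        rw [Finset.sum_comm]
        refine Finset.sum_congr rfl fun z _ => ?_
        rw [← TensorProduct.sum_tmul]
        congr 1
        calc (∑ j ∈ (w i).index, Sa ((w i).left j) * ((w i).right j * z.1))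
            = (∑ j ∈ (w i).index, Sa ((w i).left j) * (w i).right j) * z.1 := by
              rw [Finset.sum_mul]
              exact Finset.sum_congr rfl fun j _ => (mul_assoc _ _ _).symm
          _ = Coalgebra.counit (R := k) (r.left i) • z.1 := by
              rw [HopfAlgebra.sum_antipode_mul_eq_algebraMap_counit (w i), ← Algebra.smul_def]
      -- T8 : collapse the counit
      _ = ∑ z ∈ F, z.1 ⊗ₜ[k] adActL k h z.2 := by
        rw [Finset.sum_comm]
        refine Finset.sum_congr rfl fun z _ => ?_
        set χ : H →ₗ[k] H ⊗[k] H :=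
          TensorProduct.mk k H H z.1 ∘ₗ LinearMap.applyₗ z.2 ∘ₗ adActL k with hχ
        have hχev : ∀ x : H, χ x = z.1 ⊗ₜ[k] adActL k x z.2 := by
          intro x
          rw [hχ]
          simp only [LinearMap.comp_apply, applyl_eval, TensorProduct.mk_apply]
        have hkey := congrArg χ (sum_counit_smul_right r)
        rw [map_sum] at hkey
        calc (∑ i ∈ r.index, Coalgebra.counit (R := k) (r.left i) •
              (z.1 ⊗ₜ[k] adActL k (r.right i) z.2))
            = ∑ i ∈ r.index, Coalgebra.counit (R := k) (r.left i) • χ (r.right i) := by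
              exact Finset.sum_congr rfl fun i _ => by rw [hχev]
          _ = ∑ i ∈ r.index, χ (Coalgebra.counit (R := k) (r.left i) • r.right i) := by
              exact Finset.sum_congr rfl fun i _ => (map_smul χ _ _).symm
          _ = χ h := hkey
          _ = z.1 ⊗ₜ[k] adActL k h z.2 := hχev h

end Stmt15Aux

namespace Stmt15Aux

variable {k H : Type*} [Field k] [Ring H] [HopfAlgebra k H]

open Coalgebra HopfAlgebra TensorProduct

local notation "Sa" => HopfAlgebra.antipode (R := k) (A := H)

lemma lid_map_id_comm (ξ : H →ₗ[k] k) (g : H →ₗ[k] H) (y : H ⊗[k] H) :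
    TensorProduct.lid k H (TensorProduct.map ξ LinearMap.id
        (TensorProduct.map LinearMap.id g y))
      = g (TensorProduct.lid k H (TensorProduct.map ξ LinearMap.id y)) := by
  induction y with
  | zero => simp
  | tmul a b => simp
  | add x y hx hy => simp [map_add, hx, hy]

lemma partI {P : H ⊗[k] H} (hC : CondC k H P) (h : H) (ξ : H →ₗ[k] k) :
    PhiP k H P (ξ ∘ₗ (adStar k H h : H →ₗ[k] H)) = adAct k H h (PhiP k H P ξ) := by
  have h1 : TensorProduct.map (ξ ∘ₗ (adStar k H h : H →ₗ[k] H)) LinearMap.id P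
      = TensorProduct.map ξ LinearMap.id
          (TensorProduct.map (adStar k H h : H →ₗ[k] H) LinearMap.id P) := by
    rw [← LinearMap.comp_apply, ← TensorProduct.map_comp, LinearMap.id_comp]
  rw [PhiP, PhiP, h1, hC h, lid_map_id_comm]

lemma trace_adStar (ξ : H →ₗ[k] k) (hξ : ∀ a b : H, ξ (a * b) = ξ (b * a)) (h : H) :
    ξ ∘ₗ (adStar k H h : H →ₗ[k] H) = Coalgebra.counit (R := k) h • ξ := by
  ext x
  set r := Repr.arbitrary k h with hr
  rw [LinearMap.comp_apply, adStar_apply r x, map_sum]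
  calc (∑ i ∈ r.index, ξ (Sa (r.left i) * x * Sa (Sa (r.right i))))
      = ∑ i ∈ r.index, ξ (x * (Sa (Sa (r.right i)) * Sa (r.left i))) := by
        refine Finset.sum_congr rfl fun i _ => ?_
        rw [mul_assoc, hξ, mul_assoc]
    _ = ξ (x * ∑ i ∈ r.index, Sa (Sa (r.right i)) * Sa (r.left i)) := by
        rw [Finset.mul_sum, map_sum]
    _ = ξ (x * (Coalgebra.counit (R := k) h • (1 : H))) := by
        rw [sum_antipodeSq_mul_antipode r]
    _ = (Coalgebra.counit (R := k) h • ξ) x := by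
        rw [mul_smul_comm, mul_one, map_smul]
        rfl

lemma PhiP_smul (P : H ⊗[k] H) (c : k) (ξ : H →ₗ[k] k) :
    PhiP k H P (c • ξ) = c • PhiP k H P ξ := by
  have : TensorProduct.map (c • ξ) LinearMap.id P
      = c • TensorProduct.map ξ LinearMap.id P := by
    rw [TensorProduct.map_smul_left]
    rfl
  rw [PhiP, PhiP, this, map_smul]

lemma central {P : H ⊗[k] H} (hP : CondA k H P) (ξ : H →ₗ[k] k)
    (hξ : ∀ a b : H, ξ (a * b) = ξ (b * a)) (a : H) :
    PhiP k H P ξ * a = a * PhiP k H P ξ := by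
  classical
  have hy : ∀ h : H, adActL k h (PhiP k H P ξ)
      = Coalgebra.counit (R := k) h • PhiP k H P ξ := by
    intro h
    rw [adActL_eq, ← partI (condC_of_condA hP) h ξ, trace_adStar ξ hξ h, PhiP_smul]
  set Φ := PhiP k H P ξ with hΦdef
  set r := Repr.arbitrary k a with hr
  set s : ∀ i, Repr k (r.right i) (H × H) := fun i => Repr.arbitrary k _ with hs
  set w : ∀ i, Repr k (r.left i) (H × H) := fun i => Repr.arbitrary k _ with hw
  have claim1 : (∑ i ∈ r.index, ∑ j ∈ (s i).index,
      (r.left i * Φ * Sa ((s i).left j)) * (s i).right j) = a * Φ := by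
    calc (∑ i ∈ r.index, ∑ j ∈ (s i).index,
          (r.left i * Φ * Sa ((s i).left j)) * (s i).right j)
        = ∑ i ∈ r.index, (r.left i * Φ) *
            ∑ j ∈ (s i).index, Sa ((s i).left j) * (s i).right j := by
          refine Finset.sum_congr rfl fun i _ => ?_
          rw [Finset.mul_sum]
          exact Finset.sum_congr rfl fun j _ => by rw [mul_assoc, mul_assoc]
      _ = ∑ i ∈ r.index, Coalgebra.counit (R := k) (r.right i) • (r.left i * Φ) := by
          refine Finset.sum_congr rfl fun i _ => ?_
          rw [HopfAlgebra.sum_antipode_mul_eq_algebraMap_counit (s i), ← Algebra.commutes, ← Algebra.smul_def]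
      _ = (∑ i ∈ r.index, Coalgebra.counit (R := k) (r.right i) • r.left i) * Φ := by
          rw [Finset.sum_mul]
          exact Finset.sum_congr rfl fun i _ => (smul_mul_assoc _ _ _).symm
      _ = a * Φ := by rw [sum_counit_smul_left r]
  have claim2 : (∑ i ∈ r.index, ∑ j ∈ (s i).index,
      (r.left i * Φ * Sa ((s i).left j)) * (s i).right j) = Φ * a := by
    set Φm : (H ⊗[k] H) ⊗[k] H →ₗ[k] H :=
      LinearMap.mul' k H ∘ₗ TensorProduct.map
        (sandAt Φ ∘ₗ TensorProduct.map LinearMap.id (HopfAlgebra.antipode (R := k)))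
        LinearMap.id with hΦm
    have hev : ∀ x y d : H, Φm ((x ⊗ₜ[k] y) ⊗ₜ[k] d) = (x * Φ * Sa y) * d := by
      intro x y d
      rw [hΦm]
      simp only [LinearMap.comp_apply, TensorProduct.map_tmul, LinearMap.mul'_apply,
        LinearMap.id_coe, id_eq, sandAt_tmul]
    have hkey := coassoc_sum Φm r w s
    calc (∑ i ∈ r.index, ∑ j ∈ (s i).index,
          (r.left i * Φ * Sa ((s i).left j)) * (s i).right j)
        = ∑ i ∈ r.index, ∑ j ∈ (s i).index,
            Φm ((r.left i ⊗ₜ[k] (s i).left j) ⊗ₜ[k] (s i).right j) := by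
          refine Finset.sum_congr rfl fun i _ => Finset.sum_congr rfl fun j _ => ?_
          rw [hev]
      _ = ∑ i ∈ r.index, ∑ j ∈ (w i).index,
            Φm (((w i).left j ⊗ₜ[k] (w i).right j) ⊗ₜ[k] r.right i) := hkey.symm
      _ = ∑ i ∈ r.index, ∑ j ∈ (w i).index,
            ((w i).left j * Φ * Sa ((w i).right j)) * r.right i := by
          refine Finset.sum_congr rfl fun i _ => Finset.sum_congr rfl fun j _ => ?_
          rw [hev]
      _ = ∑ i ∈ r.index, (adActL k (r.left i) Φ) * r.right i := by
          refine Finset.sum_congr rfl fun i _ => ?_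
          rw [adActL_apply (w i), Finset.sum_mul]
      _ = ∑ i ∈ r.index, Coalgebra.counit (R := k) (r.left i) • (Φ * r.right i) := by
          refine Finset.sum_congr rfl fun i _ => ?_
          rw [hy, smul_mul_assoc]
      _ = Φ * ∑ i ∈ r.index, Coalgebra.counit (R := k) (r.left i) • r.right i := by
          rw [Finset.mul_sum]
          exact Finset.sum_congr rfl fun i _ => by rw [mul_smul_comm]
      _ = Φ * a := by rw [sum_counit_smul_right r]
  exact claim2.symm.trans claim1

end Stmt15Aux


theorem stmt15 (k H : Type*) [Field k] [Ring H] [HopfAlgebra k H]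
    (P : H ⊗[k] H) (hP : CondA k H P) :
    (∀ (h : H) (ξ : H →ₗ[k] k),
      PhiP k H P (ξ ∘ₗ (adStar k H h : H →ₗ[k] H)) = adAct k H h (PhiP k H P ξ)) ∧
    (∀ ξ : H →ₗ[k] k, (∀ a b : H, ξ (a * b) = ξ (b * a)) →
      ∀ a : H, PhiP k H P ξ * a = a * PhiP k H P ξ) := by
  constructor
  · exact fun h ξ => Stmt15Aux.partI (Stmt15Aux.condC_of_condA hP) h ξ
  · exact fun ξ hξ a => Stmt15Aux.central hP ξ hξ a
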